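/- arXiv:2601.07299 — 3 statements merged into one kernel-verified Lean document; each statement's English description precedes it below -/
import Mathlib

section
/- Let M₀ ∈ ℝ, σ > 0 and λ > 0. The Cauchy distribution C(M₀, λ) overbounds the centrally-aligned Gaussian distribution N(M₀, σ) — that is, F_G(x; M₀, σ) ≤ F_C(x; M₀, λ) for all x ≤ M₀ and F_G(x; M₀, σ) ≥ F_C(x; M₀, λ) for all x > M₀ — if and only if λ ≥ √(2/π)·σ. -/
/-- Gaussian PDF with location `μ` and scale `σ`. -/
noncomputable def gaussPDF (μ σ x : ℝ) : ℝ :=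
  (1 / (σ * Real.sqrt (2 * Real.pi))) * Real.exp (-(x - μ) ^ 2 / (2 * σ ^ 2))

/-- Gaussian CDF with location `μ` and scale `σ`. -/
noncomputable def gaussCDF (μ σ x : ℝ) : ℝ :=
  ∫ t in Set.Iic x, gaussPDF μ σ t

/-- Cauchy CDF with location `m` and scale `lam`. -/
noncomputable def cauchyCDF (m lam x : ℝ) : ℝ :=
  1 / 2 + (1 / Real.pi) * Real.arctan ((x - m) / lam)

open MeasureTheory Set Real Filter Topology

noncomputable def cauchyPDF (m lam x : ℝ) : ℝ :=
  1 / (lam * Real.pi * (1 + ((x - m) / lam) ^ 2))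

noncomputable def psiAux (σ lam t : ℝ) : ℝ :=
  (lam * Real.pi / (σ * Real.sqrt (2 * Real.pi))) * (1 + t / lam ^ 2) *
    Real.exp (-t / (2 * σ ^ 2))

/- ### Gaussian facts -/

lemma gaussPDF_eq (μ : ℝ) {σ : ℝ} (hσ : 0 < σ) :
    gaussPDF μ σ = ProbabilityTheory.gaussianPDFReal μ ⟨σ^2, sq_nonneg σ⟩ := by
  funext x
  unfold gaussPDF ProbabilityTheory.gaussianPDFReal
  have h : Real.sqrt (2 * Real.pi * (σ^2)) = σ * Real.sqrt (2 * Real.pi) := by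
    rw [Real.sqrt_mul (by positivity), Real.sqrt_sq hσ.le, mul_comm]
  show _ = (Real.sqrt (2 * Real.pi * σ^2))⁻¹ * Real.exp (-(x - μ) ^ 2 / (2 * σ^2))
  rw [h, one_div]

lemma integrable_gaussPDF (μ : ℝ) {σ : ℝ} (hσ : 0 < σ) : Integrable (gaussPDF μ σ) := by
  rw [gaussPDF_eq μ hσ]; exact ProbabilityTheory.integrable_gaussianPDFReal _ _

lemma integral_gaussPDF (μ : ℝ) {σ : ℝ} (hσ : 0 < σ) : ∫ x, gaussPDF μ σ x = 1 := by
  rw [gaussPDF_eq μ hσ]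
  exact ProbabilityTheory.integral_gaussianPDFReal_eq_one μ
    (by simp [hσ.ne'] : (⟨σ^2, sq_nonneg σ⟩ : NNReal) ≠ 0)

lemma continuous_gaussPDF (μ σ : ℝ) : Continuous (gaussPDF μ σ) := by
  unfold gaussPDF; fun_prop

lemma hasDerivAt_gaussCDF (μ : ℝ) {σ : ℝ} (hσ : 0 < σ) (x : ℝ) :
    HasDerivAt (gaussCDF μ σ) (gaussPDF μ σ x) x := by
  have hint := integrable_gaussPDF μ hσ
  have heq : gaussCDF μ σ = fun y => (∫ t in (0:ℝ)..y, gaussPDF μ σ t) + gaussCDF μ σ 0 := by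
    funext y
    have := intervalIntegral.integral_Iic_sub_Iic (μ := volume) (f := gaussPDF μ σ)
      (a := (0:ℝ)) (b := y) hint.integrableOn hint.integrableOn
    unfold gaussCDF
    linarith [this]
  rw [heq]
  refine HasDerivAt.add_const _ ?_
  exact intervalIntegral.integral_hasDerivAt_right hint.intervalIntegrable
    ((continuous_gaussPDF μ σ).stronglyMeasurable.stronglyMeasurableAtFilter)
    (continuous_gaussPDF μ σ).continuousAt

lemma setIntegral_comp_add_right_Iic (c d : ℝ) (f : ℝ → ℝ) :
    (∫ x in Iic c, f (x + d)) = ∫ x in Iic (c + d), f x := by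
  have A : MeasurableEmbedding fun x : ℝ => x + d :=
    (Homeomorph.addRight d).isClosedEmbedding.measurableEmbedding
  have h := A.setIntegral_map (μ := volume) f (Iic (c + d))
  rw [map_add_right_eq_self volume d] at h
  rw [h]
  congr 1
  ext x; simp

lemma gaussCDF_reflect (μ : ℝ) {σ : ℝ} (hσ : 0 < σ) (u : ℝ) :
    gaussCDF μ σ (μ - u) = 1 - gaussCDF μ σ (μ + u) := by
  have hint := integrable_gaussPDF μ hσ
  have hsplit : gaussCDF μ σ (μ + u) + ∫ x in Ioi (μ + u), gaussPDF μ σ x = 1 := by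
    rw [← integral_gaussPDF μ hσ]
    unfold gaussCDF
    rw [← setIntegral_union (Iic_disjoint_Ioi le_rfl) measurableSet_Ioi
      hint.integrableOn hint.integrableOn, Iic_union_Ioi, setIntegral_univ]
  have hrefl : (∫ x in Ioi (μ + u), gaussPDF μ σ x) = gaussCDF μ σ (μ - u) := by
    have h1 : (∫ x in Iic (-(μ + u)), gaussPDF μ σ (-x)) = ∫ x in Ioi (μ + u), gaussPDF μ σ x := by
      simpa using integral_comp_neg_Iic (-(μ + u)) (gaussPDF μ σ)
    have h2 : ∀ x : ℝ, gaussPDF μ σ (-x) = gaussPDF μ σ (x + 2 * μ) := by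
      intro x; unfold gaussPDF; ring_nf
    rw [← h1]
    simp_rw [h2]
    rw [setIntegral_comp_add_right_Iic]
    unfold gaussCDF
    norm_num
    ring_nf
  linarith [hsplit, hrefl]

lemma gaussCDF_self (μ : ℝ) {σ : ℝ} (hσ : 0 < σ) : gaussCDF μ σ μ = 1 / 2 := by
  have := gaussCDF_reflect μ hσ 0
  simp at this
  linarith

lemma tendsto_gaussCDF_atTop (μ : ℝ) {σ : ℝ} (hσ : 0 < σ) :
    Tendsto (gaussCDF μ σ) atTop (𝓝 1) := by
  have hcov : AECover (volume : Measure ℝ) atTop (fun x : ℝ => Iic x) :=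
    aecover_Iic tendsto_id
  have := hcov.integral_tendsto_of_countably_generated (integrable_gaussPDF μ hσ)
  rwa [integral_gaussPDF μ hσ] at this

/- ### Cauchy facts -/

lemma cauchyPDF_pos (m : ℝ) {lam : ℝ} (hlam : 0 < lam) (x : ℝ) : 0 < cauchyPDF m lam x := by
  unfold cauchyPDF; positivity

lemma cauchyCDF_self (m lam : ℝ) : cauchyCDF m lam m = 1 / 2 := by
  simp [cauchyCDF]

lemma cauchyCDF_reflect (m lam u : ℝ) : cauchyCDF m lam (m - u) = 1 - cauchyCDF m lam (m + u) := by
  unfold cauchyCDF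
  have : (m - u - m) / lam = -((m + u - m) / lam) := by ring
  rw [this, Real.arctan_neg]
  have hπ : (Real.pi : ℝ) ≠ 0 := Real.pi_ne_zero
  field_simp
  ring

lemma hasDerivAt_cauchyCDF (m : ℝ) {lam : ℝ} (hlam : 0 < lam) (x : ℝ) :
    HasDerivAt (cauchyCDF m lam) (cauchyPDF m lam x) x := by
  have h1 : HasDerivAt (fun y : ℝ => (y - m) / lam) (1 / lam) x := by
    simpa using ((hasDerivAt_id x).sub_const m).div_const lam
  have h2 := (Real.hasDerivAt_arctan ((x - m) / lam)).comp x h1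
  have h3 := (h2.const_mul (1 / Real.pi)).const_add (1 / 2)
  refine h3.congr_deriv ?_
  unfold cauchyPDF
  have hπ : (Real.pi : ℝ) ≠ 0 := Real.pi_ne_zero
  field_simp

lemma tendsto_cauchyCDF_atTop (m : ℝ) {lam : ℝ} (hlam : 0 < lam) :
    Tendsto (cauchyCDF m lam) atTop (𝓝 1) := by
  have h1 : Tendsto (fun x : ℝ => (x - m) / lam) atTop atTop := by
    apply Tendsto.atTop_div_const hlam
    exact Tendsto.congr (fun x => (sub_eq_add_neg x m).symm) (tendsto_atTop_add_const_right atTop (-m) tendsto_id)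
  have h2 := ((Real.tendsto_arctan_atTop.mono_right nhdsWithin_le_nhds).comp h1).const_mul
    (1 / Real.pi)
  have h3 := h2.const_add (1 / 2)
  have : (1 : ℝ) / 2 + 1 / Real.pi * (Real.pi / 2) = 1 := by field_simp; norm_num
  rw [this] at h3
  exact h3

/- ### psiAux analysis -/

lemma hasDerivAt_psiAux {σ lam : ℝ} (hσ : 0 < σ) (hlam : 0 < lam) (t : ℝ) :
    HasDerivAt (psiAux σ lam)
      ((lam * Real.pi / (σ * Real.sqrt (2 * Real.pi))) * Real.exp (-t / (2 * σ ^ 2)) *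
        ((2 * σ ^ 2 - lam ^ 2 - t) / (2 * σ ^ 2 * lam ^ 2))) t := by
  set c := lam * Real.pi / (σ * Real.sqrt (2 * Real.pi)) with hc
  have h1 : HasDerivAt (fun t : ℝ => c * (1 + t / lam ^ 2)) (c / lam ^ 2) t := by
    exact ((((hasDerivAt_id t).div_const (lam ^ 2)).const_add 1).const_mul c).congr_deriv (by ring)
  have h2 : HasDerivAt (fun t : ℝ => Real.exp (-t / (2 * σ ^ 2)))
      (Real.exp (-t / (2 * σ ^ 2)) * (-1 / (2 * σ ^ 2))) t := by
    have : HasDerivAt (fun t : ℝ => -t / (2 * σ ^ 2)) (-1 / (2 * σ ^ 2)) t := by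
      simpa using ((hasDerivAt_id t).neg.div_const (2 * σ ^ 2))
    exact ((Real.hasDerivAt_exp _).comp t this).congr_deriv (by ring)
  have h3 := h1.mul h2
  refine h3.congr_deriv ?_
  have hσ' : σ ≠ 0 := hσ.ne'
  have hlam' : lam ≠ 0 := hlam.ne'
  field_simp
  ring

lemma psiAux_zero (σ lam : ℝ) :
    psiAux σ lam 0 = lam * Real.pi / (σ * Real.sqrt (2 * Real.pi)) := by
  simp [psiAux]

lemma psiAux_key {σ lam : ℝ} (hσ : 0 < σ) (hlam : 0 < lam)
    (hc : 1 ≤ lam * Real.pi / (σ * Real.sqrt (2 * Real.pi))) :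
    ∀ s t : ℝ, 0 ≤ s → s ≤ t → 1 ≤ psiAux σ lam t → 1 ≤ psiAux σ lam s := by
  intro s t hs hst hψt
  have hcont : Continuous (psiAux σ lam) := by unfold psiAux; fun_prop
  have hdiff : ∀ r : ℝ, DifferentiableAt ℝ (psiAux σ lam) r :=
    fun r => (hasDerivAt_psiAux hσ hlam r).differentiableAt
  have hderiv : ∀ r : ℝ, deriv (psiAux σ lam) r =
      (lam * Real.pi / (σ * Real.sqrt (2 * Real.pi))) * Real.exp (-r / (2 * σ ^ 2)) *
        ((2 * σ ^ 2 - lam ^ 2 - r) / (2 * σ ^ 2 * lam ^ 2)) :=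
    fun r => (hasDerivAt_psiAux hσ hlam r).deriv
  by_cases hcase : s ≤ 2 * σ ^ 2 - lam ^ 2
  · have hmono : MonotoneOn (psiAux σ lam) (Icc 0 (2 * σ ^ 2 - lam ^ 2)) := by
      apply monotoneOn_of_deriv_nonneg (convex_Icc _ _) hcont.continuousOn
        (fun r _ => (hdiff r).differentiableWithinAt)
      intro r hr
      rw [interior_Icc] at hr
      rw [hderiv r]
      have h1 : 0 ≤ 2 * σ ^ 2 - lam ^ 2 - r := by linarith [hr.2]
      positivity
    have h0 : (0:ℝ) ∈ Icc 0 (2 * σ ^ 2 - lam ^ 2) := ⟨le_rfl, le_trans hs hcase⟩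
    have hsmem : s ∈ Icc 0 (2 * σ ^ 2 - lam ^ 2) := ⟨hs, hcase⟩
    have := hmono h0 hsmem hs
    rw [psiAux_zero] at this
    linarith
  · push_neg at hcase
    have hanti : AntitoneOn (psiAux σ lam) (Ici s) := by
      apply antitoneOn_of_deriv_nonpos (convex_Ici _) hcont.continuousOn
        (fun r _ => (hdiff r).differentiableWithinAt)
      intro r hr
      rw [interior_Ici] at hr
      rw [hderiv r]
      have h1 : 2 * σ ^ 2 - lam ^ 2 - r ≤ 0 := by linarith [hr.out]
      have : (2 * σ ^ 2 - lam ^ 2 - r) / (2 * σ ^ 2 * lam ^ 2) ≤ 0 := by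
        apply div_nonpos_of_nonpos_of_nonneg h1; positivity
      exact mul_nonpos_of_nonneg_of_nonpos (by positivity) this
    exact le_trans hψt (hanti (le_refl s : s ∈ Ici s) hst hst)

/- ### relating the PDFs -/

lemma gaussPDF_eq_mul (M₀ : ℝ) {σ lam : ℝ} (hσ : 0 < σ) (hlam : 0 < lam) (x : ℝ) :
    gaussPDF M₀ σ x = cauchyPDF M₀ lam x * psiAux σ lam ((x - M₀) ^ 2) := by
  unfold gaussPDF cauchyPDF psiAux
  have hσ' : σ ≠ 0 := hσ.ne'
  have hlam' : lam ≠ 0 := hlam.ne'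
  have hπ : (Real.pi : ℝ) ≠ 0 := Real.pi_ne_zero
  have hsq : Real.sqrt (2 * Real.pi) ≠ 0 := by positivity
  have hden : lam * Real.pi * (1 + ((x - M₀) / lam) ^ 2) ≠ 0 := by positivity
  field_simp

lemma D_nonneg_iff (M₀ : ℝ) {σ lam : ℝ} (hσ : 0 < σ) (hlam : 0 < lam) (x : ℝ) :
    0 ≤ gaussPDF M₀ σ x - cauchyPDF M₀ lam x ↔ 1 ≤ psiAux σ lam ((x - M₀) ^ 2) := by
  rw [sub_nonneg, gaussPDF_eq_mul M₀ hσ hlam x]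
  exact le_mul_iff_one_le_right (cauchyPDF_pos M₀ hlam x)

lemma cond_iff {σ lam : ℝ} (hσ : 0 < σ) (hlam : 0 < lam) :
    Real.sqrt (2 / Real.pi) * σ ≤ lam ↔
      1 ≤ lam * Real.pi / (σ * Real.sqrt (2 * Real.pi)) := by
  have hπ := Real.pi_pos
  have hs : Real.sqrt (2 / Real.pi) = Real.sqrt (2 * Real.pi) / Real.pi := by
    rw [show (2 / Real.pi : ℝ) = (2 * Real.pi) / Real.pi ^ 2 by field_simp]
    rw [Real.sqrt_div (by positivity), Real.sqrt_sq hπ.le]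
  have h2 : (0:ℝ) < σ * Real.sqrt (2 * Real.pi) := by positivity
  rw [hs, one_le_div h2, div_mul_eq_mul_div, div_le_iff₀ hπ]
  constructor <;> intro h <;> nlinarith [h]

/- ### Main monotone comparison -/

lemma right_side (M₀ : ℝ) {σ lam : ℝ} (hσ : 0 < σ) (hlam : 0 < lam)
    (hcond : Real.sqrt (2 / Real.pi) * σ ≤ lam) :
    ∀ x, M₀ ≤ x → cauchyCDF M₀ lam x ≤ gaussCDF M₀ σ x := by
  have hc : 1 ≤ lam * Real.pi / (σ * Real.sqrt (2 * Real.pi)) := (cond_iff hσ hlam).1 hcond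
  set H : ℝ → ℝ := fun x => gaussCDF M₀ σ x - cauchyCDF M₀ lam x with hHdef
  have hH : ∀ x, HasDerivAt H (gaussPDF M₀ σ x - cauchyPDF M₀ lam x) x :=
    fun x => (hasDerivAt_gaussCDF M₀ hσ x).sub (hasDerivAt_cauchyCDF M₀ hlam x)
  have hH0 : H M₀ = 0 := by
    simp [hHdef, gaussCDF_self M₀ hσ, cauchyCDF_self]
  have hHlim : Tendsto H atTop (𝓝 0) := by
    simpa using (tendsto_gaussCDF_atTop M₀ hσ).sub (tendsto_cauchyCDF_atTop M₀ hlam)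
  have hDmono : ∀ y z, M₀ ≤ y → y ≤ z →
      0 ≤ gaussPDF M₀ σ z - cauchyPDF M₀ lam z →
      0 ≤ gaussPDF M₀ σ y - cauchyPDF M₀ lam y := by
    intro y z hy hyz hz
    rw [D_nonneg_iff M₀ hσ hlam] at hz ⊢
    refine psiAux_key hσ hlam hc _ _ (sq_nonneg _) ?_ hz
    exact pow_le_pow_left₀ (by linarith) (by linarith) 2
  intro x hx
  rw [← sub_nonneg]
  show (0:ℝ) ≤ H x
  by_cases hcase : ∀ z ∈ Icc M₀ x, 0 ≤ gaussPDF M₀ σ z - cauchyPDF M₀ lam z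
  · have hmono : MonotoneOn H (Icc M₀ x) := by
      apply monotoneOn_of_deriv_nonneg (convex_Icc _ _)
        (fun z _ => (hH z).continuousAt.continuousWithinAt)
        (fun z _ => (hH z).differentiableAt.differentiableWithinAt)
      intro z hz
      rw [(hH z).deriv]
      exact hcase z (interior_subset hz)
    have := hmono ⟨le_rfl, hx⟩ ⟨hx, le_rfl⟩ hx
    linarith [hH0]
  · push_neg at hcase
    obtain ⟨y, hy, hyneg⟩ := hcase
    have hDneg : ∀ z, x ≤ z → gaussPDF M₀ σ z - cauchyPDF M₀ lam z ≤ 0 := by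
      intro z hz
      by_contra hpos
      push_neg at hpos
      exact absurd (hDmono y z hy.1 (le_trans hy.2 hz) hpos.le) (not_le.2 hyneg)
    have hanti : AntitoneOn H (Ici x) := by
      apply antitoneOn_of_deriv_nonpos (convex_Ici _)
        (fun z _ => (hH z).continuousAt.continuousWithinAt)
        (fun z _ => (hH z).differentiableAt.differentiableWithinAt)
      intro z hz
      rw [interior_Ici] at hz
      rw [(hH z).deriv]
      exact hDneg z hz.out.le
    refine le_of_tendsto hHlim (eventually_atTop.2 ⟨x, fun z hz => ?_⟩)
    exact hanti (self_mem_Ici) hz hz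


/-- The Cauchy distribution `C(M₀, λ)` overbounds the centrally-aligned Gaussian
distribution `N(M₀, σ)` if and only if `λ ≥ √(2/π)·σ`. -/
theorem cauchy_overbounds_gaussian_iff (M₀ σ lam : ℝ) (hσ : 0 < σ) (hlam : 0 < lam) :
    ((∀ x ≤ M₀, gaussCDF M₀ σ x ≤ cauchyCDF M₀ lam x) ∧
      (∀ x > M₀, cauchyCDF M₀ lam x ≤ gaussCDF M₀ σ x)) ↔
    lam ≥ Real.sqrt (2 / Real.pi) * σ := by
  constructor
  · rintro ⟨_, h2⟩
    set H : ℝ → ℝ := fun x => gaussCDF M₀ σ x - cauchyCDF M₀ lam x with hHdef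
    have hH : HasDerivAt H (gaussPDF M₀ σ M₀ - cauchyPDF M₀ lam M₀) M₀ :=
      (hasDerivAt_gaussCDF M₀ hσ M₀).sub (hasDerivAt_cauchyCDF M₀ hlam M₀)
    have hH0 : H M₀ = 0 := by
      simp [hHdef, gaussCDF_self M₀ hσ, cauchyCDF_self]
    rw [hasDerivAt_iff_tendsto_slope] at hH
    have hslope : Tendsto (slope H M₀) (𝓝[>] M₀)
        (𝓝 (gaussPDF M₀ σ M₀ - cauchyPDF M₀ lam M₀)) :=
      hH.mono_left (nhdsWithin_mono _ (fun z hz => ne_of_gt hz))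
    have hD0 : 0 ≤ gaussPDF M₀ σ M₀ - cauchyPDF M₀ lam M₀ := by
      refine ge_of_tendsto hslope ?_
      filter_upwards [self_mem_nhdsWithin] with z hz
      rw [slope_def_field]
      have hHz : 0 ≤ H z := by
        have := h2 z hz
        simp only [hHdef]
        linarith
      rw [hH0]
      have hzx : (0:ℝ) < z - M₀ := sub_pos.2 hz
      apply div_nonneg (by linarith) (by linarith)
    rw [D_nonneg_iff M₀ hσ hlam M₀] at hD0
    simp only [sub_self, ne_eq, OfNat.ofNat_ne_zero, not_false_eq_true, zero_pow,
      psiAux_zero] at hD0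
    exact (cond_iff hσ hlam).2 hD0
  · intro hcond
    refine ⟨fun x hx => ?_, fun x hx => right_side M₀ hσ hlam hcond x hx.le⟩
    have hx' : x = M₀ - (M₀ - x) := by ring
    rw [hx', gaussCDF_reflect M₀ hσ, cauchyCDF_reflect]
    have := right_side M₀ hσ hlam hcond (M₀ + (M₀ - x)) (by linarith)
    linarith
end

section
/- Let σ > 0 and λ ≥ √2·σ, and define g(u) = (λ/σ)·√(π/2)·exp(−u²/(2σ²))·(1 + u²/λ²) − 1. Then g is strictly increasing on (−∞, 0]. -/
/-- If `σ > 0` and `λ ≥ √2·σ`, the ratio function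
`g(u) = (λ/σ)·√(π/2)·exp(−u²/(2σ²))·(1 + u²/λ²) − 1` is strictly increasing on `(−∞, 0]`. -/
theorem ratio_strictMonoOn (σ lam : ℝ) (hσ : 0 < σ) (hlam : lam ≥ Real.sqrt 2 * σ) :
    StrictMonoOn
      (fun u : ℝ =>
        (lam / σ) * Real.sqrt (Real.pi / 2) * Real.exp (-u ^ 2 / (2 * σ ^ 2)) *
          (1 + u ^ 2 / lam ^ 2) - 1)
      (Set.Iic 0) := by
  have hlam0 : 0 < lam := lt_of_lt_of_le (by positivity) hlam
  have hlam2 : 2 * σ ^ 2 ≤ lam ^ 2 := by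
    nlinarith [Real.sq_sqrt (by norm_num : (0:ℝ) ≤ 2), Real.sqrt_nonneg 2,
      mul_self_le_mul_self (by positivity : (0:ℝ) ≤ Real.sqrt 2 * σ) hlam]
  have hA : 0 < lam / σ * Real.sqrt (Real.pi / 2) := by positivity
  apply strictMonoOn_of_deriv_pos (convex_Iic 0)
  · apply Continuous.continuousOn
    continuity
  · intro x hx
    rw [interior_Iic] at hx
    have hsq : HasDerivAt (fun u : ℝ => u ^ 2) (2 * x) x := by
      simpa using hasDerivAt_pow 2 x
    have h1 : HasDerivAt (fun u : ℝ => -u ^ 2 / (2 * σ ^ 2)) (-x / σ ^ 2) x := by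
      have := (hsq.neg).div_const (2 * σ ^ 2)
      refine this.congr_deriv ?_
      field_simp
    have h2 := h1.exp
    have h3 : HasDerivAt (fun u : ℝ => 1 + u ^ 2 / lam ^ 2) (2 * x / lam ^ 2) x := by
      simpa using (hsq.div_const (lam ^ 2)).const_add 1
    have hd : HasDerivAt
        (fun u : ℝ =>
          (lam / σ) * Real.sqrt (Real.pi / 2) * Real.exp (-u ^ 2 / (2 * σ ^ 2)) *
            (1 + u ^ 2 / lam ^ 2) - 1)
        ((lam / σ) * Real.sqrt (Real.pi / 2) *
          (Real.exp (-x ^ 2 / (2 * σ ^ 2)) * (-x / σ ^ 2) * (1 + x ^ 2 / lam ^ 2) +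
            Real.exp (-x ^ 2 / (2 * σ ^ 2)) * (2 * x / lam ^ 2))) x := by
      have := ((h2.mul h3).const_mul ((lam / σ) * Real.sqrt (Real.pi / 2))).sub_const 1
      refine this.congr_of_eventuallyEq (Filter.Eventually.of_forall fun u => ?_)
      simp only [Pi.mul_apply]
      ring
    rw [hd.deriv]
    have hexp : 0 < Real.exp (-x ^ 2 / (2 * σ ^ 2)) := Real.exp_pos _
    have hxneg : x < 0 := hx
    apply mul_pos hA
    have key : (0:ℝ) < -x / σ ^ 2 * (1 + x ^ 2 / lam ^ 2) + 2 * x / lam ^ 2 := by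
      have h : -x / σ ^ 2 * (1 + x ^ 2 / lam ^ 2) + 2 * x / lam ^ 2 =
          (-x) * (lam ^ 2 + x ^ 2 - 2 * σ ^ 2) / (σ ^ 2 * lam ^ 2) := by
        field_simp
        ring
      rw [h]
      apply div_pos
      · have hx2 : 0 < x * x := mul_pos_of_neg_of_neg hxneg hxneg
        nlinarith
      · positivity
    nlinarith [mul_pos hexp key]
end

section
/- Let F_e : ℝ → ℝ, σ > 0 and λ ≥ √(2/π)·σ. If the zero-mean Gaussian distribution N(0, σ) is a single-CDF overbound of F_e, i.e. F_G(x; 0, σ) ≥ F_e(x) for all x ≤ 0 and F_G(x; 0, σ) ≤ F_e(x) for all x > 0, then the zero-mean Cauchy distribution C(0, λ) is also a single-CDF overbound of F_e: F_C(x; 0, λ) ≥ F_e(x) for all x ≤ 0 and F_C(x; 0, λ) ≤ F_e(x) for all x > 0. -/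
open MeasureTheory Set Real

noncomputable def cPDF (lam t : ℝ) : ℝ := lam / (Real.pi * (lam ^ 2 + t ^ 2))

lemma gaussPDF_eq_s13 (σ : ℝ) : gaussPDF 0 σ =
    fun t => (1 / (σ * Real.sqrt (2 * Real.pi))) * Real.exp (-(1 / (2 * σ ^ 2)) * t ^ 2) := by
  funext t
  unfold gaussPDF
  congr 1
  · congr 1
    ring

lemma gauss_integrable {σ : ℝ} (hσ : 0 < σ) : Integrable (gaussPDF 0 σ) := by
  rw [gaussPDF_eq_s13]
  exact (integrable_exp_neg_mul_sq (by positivity)).const_mul _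

lemma gauss_cont (σ : ℝ) : Continuous (gaussPDF 0 σ) := by
  rw [gaussPDF_eq_s13]; continuity

lemma gauss_total {σ : ℝ} (hσ : 0 < σ) : ∫ t, gaussPDF 0 σ t = 1 := by
  rw [gaussPDF_eq_s13]
  rw [MeasureTheory.integral_const_mul]
  rw [integral_gaussian]
  have h1 : π / (1 / (2 * σ ^ 2)) = 2 * π * σ ^ 2 := by
    field_simp
  rw [h1, show (2:ℝ) * π * σ ^ 2 = (2*π) * σ^2 from by ring,
    Real.sqrt_mul (by positivity) (σ^2), Real.sqrt_sq hσ.le]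
  have h2 : Real.sqrt (2*π) ≠ 0 := by positivity
  field_simp

lemma cPDF_eq {lam : ℝ} (hl : 0 < lam) :
    cPDF lam = fun t => (1 / (Real.pi * lam)) * (1 + (t / lam) ^ 2)⁻¹ := by
  funext t
  unfold cPDF
  have h1 : (0:ℝ) < lam ^ 2 + t ^ 2 := by positivity
  have h2 : (1 + (t/lam)^2) = (lam^2 + t^2)/lam^2 := by
    field_simp
  rw [h2, inv_div]
  field_simp

lemma cPDF_cont {lam : ℝ} (hl : 0 < lam) : Continuous (cPDF lam) := by
  unfold cPDF
  exact continuous_const.div (by continuity) (fun t => by positivity)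

lemma cPDF_integrable {lam : ℝ} (hl : 0 < lam) : Integrable (cPDF lam) := by
  rw [cPDF_eq hl]
  exact (integrable_inv_one_add_sq.comp_div hl.ne').const_mul _

lemma cPDF_total {lam : ℝ} (hl : 0 < lam) : ∫ t, cPDF lam t = 1 := by
  rw [cPDF_eq hl]
  rw [MeasureTheory.integral_const_mul]
  rw [MeasureTheory.Measure.integral_comp_div (fun t => (1 + t^2)⁻¹) lam]
  rw [integral_univ_inv_one_add_sq]
  rw [abs_of_pos hl, smul_eq_mul]
  field_simp

lemma integral_Iic_zero_of_even {f : ℝ → ℝ} (hf : Integrable f) (he : ∀ t, f (-t) = f t) :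
    ∫ t in Iic (0:ℝ), f t = (1/2) * ∫ t, f t := by
  have h1 : ∫ t in Iic (0:ℝ), f t = ∫ t in Ioi (0:ℝ), f t := by
    have := integral_comp_neg_Iic (0:ℝ) f
    rw [neg_zero] at this
    rw [← this]
    exact setIntegral_congr_fun measurableSet_Iic (fun t _ => (he t).symm)
  have h2 := intervalIntegral.integral_Iic_add_Ioi (b := (0:ℝ)) (hf.integrableOn) (hf.integrableOn)
  linarith

lemma gauss_even (σ : ℝ) : ∀ t, gaussPDF 0 σ (-t) = gaussPDF 0 σ t := by
  intro t; unfold gaussPDF; congr 2; ring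

lemma gauss_Iic_zero {σ : ℝ} (hσ : 0 < σ) : ∫ t in Iic (0:ℝ), gaussPDF 0 σ t = 1/2 := by
  rw [integral_Iic_zero_of_even (gauss_integrable hσ) (gauss_even σ), gauss_total hσ]
  norm_num

lemma gaussCDF_eq_sub {σ : ℝ} (hσ : 0 < σ) (x : ℝ) :
    gaussCDF 0 σ x = 1/2 - ∫ t in x..(0:ℝ), gaussPDF 0 σ t := by
  have h := intervalIntegral.integral_Iic_sub_Iic (a := x) (b := (0:ℝ))
    ((gauss_integrable hσ).integrableOn) ((gauss_integrable hσ).integrableOn)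
  rw [gauss_Iic_zero hσ] at h
  unfold gaussCDF
  linarith

lemma cauchy_interval {lam : ℝ} (hl : 0 < lam) (a b : ℝ) :
    ∫ t in a..b, cPDF lam t = (1/Real.pi) * (Real.arctan (b/lam) - Real.arctan (a/lam)) := by
  rw [cPDF_eq hl]
  rw [intervalIntegral.integral_const_mul]
  rw [intervalIntegral.integral_comp_div (c := lam) (f := fun t => (1 + t^2)⁻¹) hl.ne']
  rw [integral_inv_one_add_sq, smul_eq_mul]
  have hπ : Real.pi ≠ 0 := Real.pi_ne_zero
  field_simp

lemma cauchy_Iic_zero {lam : ℝ} (hl : 0 < lam) : ∫ t in Iic (0:ℝ), cPDF lam t = 1/2 := by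
  rw [integral_Iic_zero_of_even (cPDF_integrable hl)
    (fun t => by unfold cPDF; rw [neg_pow]; norm_num), cPDF_total hl]
  norm_num

lemma cauchyCDF_eq_sub {lam : ℝ} (hl : 0 < lam) (x : ℝ) :
    cauchyCDF 0 lam x = 1/2 - ∫ t in x..(0:ℝ), cPDF lam t := by
  rw [cauchy_interval hl]
  unfold cauchyCDF
  rw [sub_zero, zero_div, Real.arctan_zero]
  ring

lemma cauchyCDF_eq_Iic {lam : ℝ} (hl : 0 < lam) (x : ℝ) :
    cauchyCDF 0 lam x = ∫ t in Iic x, cPDF lam t := by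
  have h := intervalIntegral.integral_Iic_sub_Iic (a := x) (b := (0:ℝ))
    ((cPDF_integrable hl).integrableOn) ((cPDF_integrable hl).integrableOn)
  rw [cauchy_Iic_zero hl] at h
  rw [cauchyCDF_eq_sub hl]
  linarith

lemma gauss_le_cauchy {σ lam : ℝ} (hσ : 0 < σ) (hlam : lam ≥ Real.sqrt (2 / Real.pi) * σ) :
    ∀ x ≤ (0:ℝ), gaussCDF 0 σ x ≤ cauchyCDF 0 lam x := by
  have hπ := Real.pi_pos
  have hsq : (0:ℝ) < Real.sqrt (2 / Real.pi) := Real.sqrt_pos.2 (by positivity)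
  have hl : 0 < lam := lt_of_lt_of_le (by positivity) hlam
  set ψ : ℝ → ℝ := fun s =>
    Real.pi * (lam ^ 2 + s) - lam * σ * Real.sqrt (2 * Real.pi) * Real.exp (s / (2 * σ ^ 2))
    with hψdef
  have hsqrt2pi : (0:ℝ) < Real.sqrt (2 * Real.pi) := Real.sqrt_pos.2 (by positivity)
  -- key identity
  have key : ∀ t : ℝ, gaussPDF 0 σ t - cPDF lam t =
      ψ (t ^ 2) / (Real.pi * (lam ^ 2 + t ^ 2) * (σ * Real.sqrt (2 * Real.pi))
        * Real.exp (t ^ 2 / (2 * σ ^ 2))) := by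
    intro t
    unfold gaussPDF cPDF
    rw [show -(t - 0) ^ 2 / (2 * σ ^ 2) = -(t ^ 2 / (2 * σ ^ 2)) by ring, Real.exp_neg]
    rw [hψdef]
    have h1 : (0:ℝ) < lam ^ 2 + t ^ 2 := by positivity
    have h2 : Real.exp (t ^ 2 / (2 * σ ^ 2)) ≠ 0 := Real.exp_ne_zero _
    field_simp
  have hden : ∀ t : ℝ, 0 < Real.pi * (lam ^ 2 + t ^ 2) * (σ * Real.sqrt (2 * Real.pi))
      * Real.exp (t ^ 2 / (2 * σ ^ 2)) := by
    intro t
    have : (0:ℝ) < lam ^ 2 + t ^ 2 := by positivity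
    positivity
  -- ψ 0 ≥ 0
  have hsqrel : Real.sqrt (2 / Real.pi) * Real.pi = Real.sqrt (2 * Real.pi) := by
    have h1 : Real.sqrt (2 / Real.pi) * Real.pi = Real.sqrt ((2 / Real.pi) * Real.pi ^ 2) := by
      rw [Real.sqrt_mul (by positivity), Real.sqrt_sq hπ.le]
    rw [h1]
    congr 1
    field_simp
  have hψ0 : 0 ≤ ψ 0 := by
    rw [hψdef]
    simp only [add_zero, zero_div, Real.exp_zero, mul_one]
    have h1 : Real.sqrt (2 / Real.pi) * σ * Real.pi ≤ lam * Real.pi :=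
      mul_le_mul_of_nonneg_right hlam hπ.le
    have h2 : σ * Real.sqrt (2 * Real.pi) ≤ lam * Real.pi := by
      calc σ * Real.sqrt (2 * Real.pi) = Real.sqrt (2 / Real.pi) * σ * Real.pi := by
            rw [← hsqrel]; ring
        _ ≤ lam * Real.pi := h1
    nlinarith [mul_le_mul_of_nonneg_left h2 hl.le]
  -- concavity
  have hconc : ∀ a b s : ℝ, 0 ≤ a → a ≤ s → s ≤ b → 0 ≤ ψ a → 0 ≤ ψ b → 0 ≤ ψ s := by
    intro a b s ha has hsb hfa hfb
    rcases eq_or_lt_of_le (has.trans hsb) with heq | hab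
    · have : a = s := le_antisymm has (heq ▸ hsb)
      rwa [this] at hfa
    set θ : ℝ := (s - a) / (b - a) with hθdef
    have hba : (0:ℝ) < b - a := by linarith
    have hθ0 : 0 ≤ θ := div_nonneg (by linarith) hba.le
    have hθ1 : θ ≤ 1 := by
      rw [hθdef, div_le_one hba]; linarith
    have hcomb : (1 - θ) * a + θ * b = s := by
      rw [hθdef]; field_simp; ring
    have hexp := convexOn_exp.2 (Set.mem_univ (a / (2 * σ ^ 2))) (Set.mem_univ (b / (2 * σ ^ 2)))
      (by linarith : (0:ℝ) ≤ 1 - θ) hθ0 (by ring)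
    simp only [smul_eq_mul] at hexp
    have harg : (1 - θ) * (a / (2 * σ ^ 2)) + θ * (b / (2 * σ ^ 2)) = s / (2 * σ ^ 2) := by
      rw [show (1 - θ) * (a / (2 * σ ^ 2)) + θ * (b / (2 * σ ^ 2))
        = ((1 - θ) * a + θ * b) / (2 * σ ^ 2) by ring, hcomb]
    rw [harg] at hexp
    rw [hψdef] at hfa hfb ⊢
    simp only at hfa hfb ⊢
    have hB : (0:ℝ) ≤ lam * σ * Real.sqrt (2 * Real.pi) := by positivity
    nlinarith [mul_le_mul_of_nonneg_left hexp hB,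
      mul_nonneg hθ0 hfb, mul_nonneg (by linarith : (0:ℝ) ≤ 1 - θ) hfa]
  -- sign transfer
  have hsign : ∀ t : ℝ, 0 ≤ ψ (t ^ 2) → cPDF lam t ≤ gaussPDF 0 σ t := by
    intro t h
    have := div_nonneg h (hden t).le
    rw [← key t] at this
    linarith
  have hsign' : ∀ t : ℝ, ψ (t ^ 2) ≤ 0 → gaussPDF 0 σ t ≤ cPDF lam t := by
    intro t h
    have := div_nonpos_of_nonpos_of_nonneg h (hden t).le
    rw [← key t] at this
    linarith
  intro x hx
  by_cases hc : 0 ≤ ψ (x ^ 2)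
  · rw [gaussCDF_eq_sub hσ, cauchyCDF_eq_sub hl]
    have hmono : ∫ t in x..(0:ℝ), cPDF lam t ≤ ∫ t in x..(0:ℝ), gaussPDF 0 σ t := by
      apply intervalIntegral.integral_mono_on hx
        ((cPDF_cont hl).intervalIntegrable _ _) ((gauss_cont σ).intervalIntegrable _ _)
      intro t ht
      obtain ⟨h1, h2⟩ := ht
      exact hsign t (hconc 0 (x ^ 2) (t ^ 2) le_rfl (by positivity) (by nlinarith) hψ0 hc)
    linarith
  · push_neg at hc
    rw [cauchyCDF_eq_Iic hl]
    unfold gaussCDF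
    apply setIntegral_mono_on ((gauss_integrable hσ).integrableOn)
      ((cPDF_integrable hl).integrableOn) measurableSet_Iic
    intro t ht
    simp only [mem_Iic] at ht
    apply hsign'
    by_contra h
    push_neg at h
    exact absurd (hconc 0 (t ^ 2) (x ^ 2) le_rfl (by positivity) (by nlinarith) hψ0 h.le) (not_le.2 hc)

lemma gauss_reflect {σ : ℝ} (hσ : 0 < σ) (x : ℝ) :
    gaussCDF 0 σ x + gaussCDF 0 σ (-x) = 1 := by
  rw [gaussCDF_eq_sub hσ, gaussCDF_eq_sub hσ]
  have h1 : ∫ t in (-x)..(0:ℝ), gaussPDF 0 σ t = ∫ t in (0:ℝ)..x, gaussPDF 0 σ t := by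
    have h2 : ∫ t in (0:ℝ)..x, gaussPDF 0 σ (-t) = ∫ t in (-x)..(-(0:ℝ)), gaussPDF 0 σ t :=
      intervalIntegral.integral_comp_neg (fun t => gaussPDF 0 σ t)
    rw [neg_zero] at h2
    rw [← h2]
    exact intervalIntegral.integral_congr (fun t _ => gauss_even σ t)
  rw [h1, intervalIntegral.integral_symm]
  ring

/-- If the zero-mean Gaussian `N(0, σ)` is a single-CDF overbound of `F_e` and
`λ ≥ √(2/π)·σ`, then the zero-mean Cauchy `C(0, λ)` is also a single-CDF
overbound of `F_e`. -/
theorem cauchy_overbound_of_gauss_overbound (F_e : ℝ → ℝ) (σ lam : ℝ)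
    (hσ : 0 < σ) (hlam : lam ≥ Real.sqrt (2 / Real.pi) * σ)
    (hG_left : ∀ x ≤ (0 : ℝ), F_e x ≤ gaussCDF 0 σ x)
    (hG_right : ∀ x > (0 : ℝ), gaussCDF 0 σ x ≤ F_e x) :
    (∀ x ≤ (0 : ℝ), F_e x ≤ cauchyCDF 0 lam x) ∧
    (∀ x > (0 : ℝ), cauchyCDF 0 lam x ≤ F_e x) := by
  have hπ := Real.pi_pos
  have hsq : (0:ℝ) < Real.sqrt (2 / Real.pi) := Real.sqrt_pos.2 (by positivity)
  have hl : 0 < lam := lt_of_lt_of_le (by positivity) hlam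
  constructor
  · intro x hx
    exact le_trans (hG_left x hx) (gauss_le_cauchy hσ hlam x hx)
  · intro x hx
    have hrc : cauchyCDF 0 lam x + cauchyCDF 0 lam (-x) = 1 := by
      unfold cauchyCDF
      rw [sub_zero, sub_zero, show (-x)/lam = -(x/lam) by ring, Real.arctan_neg]
      ring
    have hrg := gauss_reflect hσ x
    have h := gauss_le_cauchy hσ hlam (-x) (by linarith)
    have := hG_right x hx
    linarith
end
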